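/- Let I ⊂ k[x,y] be the ideal ⟨x+y⟩ ∩ ⟨x^3, y^3⟩. For every f in the radical of I, one has f^5 ∈ I; that is, the Noether exponent of I is at most 5. -/

import Mathlib

open MvPolynomial

lemma prime_X_add_Y {k : Type*} [Field k] :
    Prime ((X 0 + X 1 : MvPolynomial (Fin 2) k)) := by
  rw [← MulEquiv.prime_iff (finSuccEquiv k 1)]
  have h1 : (X 1 : MvPolynomial (Fin 2) k) = X (Fin.succ 0) := rfl
  show Prime ((finSuccEquiv k 1) (X 0 + X 1))
  rw [map_add, finSuccEquiv_X_zero, h1, finSuccEquiv_X_succ]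
  have : (Polynomial.X + Polynomial.C (X 0) :
      Polynomial (MvPolynomial (Fin 1) k)) = Polynomial.X - Polynomial.C (-(X 0)) := by rw [map_neg, sub_neg_eq_add]
  rw [this]
  exact Polynomial.prime_X_sub_C _

/-- For `I = ⟨x+y⟩ ⊓ ⟨x³, y³⟩ ⊆ k[x,y]` (`k` of characteristic zero), every `f` in the
radical of `I` satisfies `f⁵ ∈ I`; i.e. the Noether exponent of `I` is at most `5`. -/
theorem noether_exponent_le_five {k : Type*} [Field k] [CharZero k] :
    let x : MvPolynomial (Fin 2) k := X 0
    let y : MvPolynomial (Fin 2) k := X 1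
    let I : Ideal (MvPolynomial (Fin 2) k) :=
      Ideal.span {x + y} ⊓ Ideal.span {x ^ 3, y ^ 3}
    ∀ f ∈ I.radical, f ^ 5 ∈ I := by
  intro x y I f hf
  have hprime : (Ideal.span {x + y}).IsPrime := by
    rw [Ideal.span_singleton_prime (by exact (prime_X_add_Y (k := k)).ne_zero)]
    exact prime_X_add_Y
  -- f is in the radical of span {x+y}, which is prime, hence radical
  have hmem : f ∈ Ideal.span {x + y} := by
    have : f ∈ (Ideal.span {x + y}).radical :=
      Ideal.radical_mono (inf_le_left : I ≤ Ideal.span {x + y}) hf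
    rwa [hprime.radical] at this
  obtain ⟨g, hg⟩ := Ideal.mem_span_singleton.mp hmem
  constructor
  · exact Ideal.pow_mem_of_mem _ hmem 5 (by norm_num)
  · rw [hg, mul_pow]
    apply Ideal.mul_mem_right
    rw [Ideal.mem_span_pair]
    exact ⟨x ^ 2 + 5 * x * y + 10 * y ^ 2, 10 * x ^ 2 + 5 * x * y + y ^ 2, by ring⟩
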